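/- Let $p$ be a prime with $p \equiv 1 \pmod k$, where $k$ is the exponent of a finite abelian group $G$ containing an element $u$ of order 2, and let $j \ge 1$. Then the exponent of the unit group $({\mathbb Z}\langle G \rangle/(p^j))^*$ equals $(p-1)p^{j-1}$. -/

import Mathlib

/-- The ideal `(u+1)` of the group ring `A[G]`. -/
noncomputable def modIdeal (A : Type*) [CommRing A] (G : Type*) [CommGroup G] (u : G) :
    Ideal (MonoidAlgebra A G) :=
  Ideal.span {MonoidAlgebra.single u 1 + 1}

/-- The modified group ring `A⟨G⟩ = A[G]/(u+1)`. -/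
noncomputable abbrev ModGR (A : Type*) [CommRing A] (G : Type*) [CommGroup G] (u : G) :=
  MonoidAlgebra A G ⧸ modIdeal A G u

/-- The scaled trace `t : A⟨G⟩ → A`, sending (the class of) `∑ a_σ σ` to `a_1 - a_u`. -/
noncomputable def tr {A : Type*} [CommRing A] {G : Type*} [CommGroup G] {u : G}
    (hu : u * u = 1) (x : ModGR A G u) : A :=
  Quotient.liftOn' x (fun f => f.coeff 1 - f.coeff u) (by
    intro f g h
    have h' : -f + g ∈ modIdeal A G u := QuotientAddGroup.leftRel_apply.mp h
    have hfg : g - f ∈ modIdeal A G u := by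
      have : -f + g = g - f := by abel
      rwa [this] at h'
    obtain ⟨w, hw⟩ := Ideal.mem_span_singleton.mp hfg
    have huinv : u⁻¹ = u := inv_eq_of_mul_eq_one_right hu
    have key : ∀ y : G, g.coeff y - f.coeff y = w.coeff (u⁻¹ * y) + w.coeff y := by
      intro y
      rw [← Finsupp.sub_apply, ← MonoidAlgebra.coeff_sub, hw, add_mul, one_mul,
        MonoidAlgebra.coeff_add, Finsupp.add_apply,
        MonoidAlgebra.coeff_single_mul_apply, one_mul]
    have e1 := key 1
    have e2 := key u
    rw [mul_one, huinv] at e1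
    rw [inv_mul_cancel] at e2
    show f.coeff 1 - f.coeff u = g.coeff 1 - g.coeff u
    linear_combination e2 - e1)



section aux
variable {R : Type*} [CommRing R]

lemma aux_binom (x : R) : ∀ n : ℕ, ∃ r : R, (1+x)^n = 1 + n*x + (n.choose 2)*x^2 + x^3*r := by
  intro n
  induction n with
  | zero => exact ⟨0, by simp⟩
  | succ n ih =>
    obtain ⟨r, hr⟩ := ih
    refine ⟨r + (n.choose 2 : R) + x*r, ?_⟩
    have hc : ((n+1).choose 2 : R) = n + (n.choose 2 : R) := by
      rw [Nat.choose_succ_succ' n 1, Nat.choose_one_right]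
      push_cast; ring
    rw [pow_succ, hr, hc]
    push_cast
    ring

lemma aux_step (p i : ℕ) (c : R) : ∃ d : R, (1 + (p:R)^(i+1)*c)^p = 1 + (p:R)^(i+2)*d := by
  obtain ⟨r, hr⟩ := aux_binom ((p:R)^(i+1)*c) p
  refine ⟨c + (p.choose 2 : R)*(p:R)^i*c^2 + (p:R)^(2*i+1)*c^3*r, ?_⟩
  rw [hr]; ring

lemma aux_upper (p : ℕ) (a : R) : ∀ m : ℕ, ∃ c : R, (1 + (p:R)*a)^(p^m) = 1 + (p:R)^(m+1)*c := by
  intro m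
  induction m with
  | zero => exact ⟨a, by simp⟩
  | succ m ih =>
    obtain ⟨c, hc⟩ := ih
    obtain ⟨d, hd⟩ := aux_step p m c
    exact ⟨d, by rw [pow_succ, pow_mul, hc, hd]⟩

lemma aux_lower (p : ℕ) (hp : p.Prime) (hodd : 3 ≤ p) :
    ∀ m : ℕ, ∃ b : ℤ, (1+(p:ℤ))^(p^m) = 1 + (p:ℤ)^(m+1)*(1+(p:ℤ)*b) := by
  obtain ⟨e, he⟩ : p ∣ p.choose 2 := hp.dvd_choose_self (by norm_num) (by omega)
  intro m
  induction m with
  | zero => exact ⟨0, by simp⟩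
  | succ m ih =>
    obtain ⟨b, hb⟩ := ih
    obtain ⟨r, hr⟩ := aux_binom ((p:ℤ)^(m+1)*(1+(p:ℤ)*b)) p
    refine ⟨b + (e:ℤ)*(p:ℤ)^m*(1+(p:ℤ)*b)^2 + (p:ℤ)^(2*m)*(1+(p:ℤ)*b)^3*r, ?_⟩
    have hce : (p.choose 2 : ℤ) = (p:ℤ)*(e:ℤ) := by exact_mod_cast he
    rw [pow_succ, pow_mul, hb, hr, hce]
    ring
end aux

lemma aux_frob {G : Type*} [CommGroup G] (p : ℕ) (hp : p.Prime) (hσ : ∀ σ : G, σ^p = σ)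
    (f : MonoidAlgebra ℤ G) : ∃ g, f^p = f + (p : MonoidAlgebra ℤ G) * g := by
  haveI : Fact p.Prime := ⟨hp⟩
  induction f using MonoidAlgebra.induction with
  | zero => exact ⟨0, by simp [zero_pow hp.ne_zero]⟩
  | single_add a b f ha hb ih =>
    obtain ⟨g, hg⟩ := ih
    obtain ⟨r, hr⟩ :=
      exists_add_pow_prime_eq hp (MonoidAlgebra.single a b) f
    obtain ⟨cb, hcb⟩ : ∃ cb : ℤ, b^p = b + (p:ℤ)*cb := by
      have h0 : ((b^p - b : ℤ) : ZMod p) = 0 := by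
        push_cast
        rw [ZMod.pow_card]
        ring
      obtain ⟨cb, hcb⟩ := (ZMod.intCast_zmod_eq_zero_iff_dvd _ p).mp h0
      exact ⟨cb, by omega⟩
    refine ⟨MonoidAlgebra.single a cb + g + MonoidAlgebra.single a b * f * r, ?_⟩
    have hs : (MonoidAlgebra.single a b : MonoidAlgebra ℤ G)^p
        = MonoidAlgebra.single a b + (p : MonoidAlgebra ℤ G) * MonoidAlgebra.single a cb := by
      rw [MonoidAlgebra.single_pow, hσ, hcb, MonoidAlgebra.natCast_def,
        MonoidAlgebra.single_mul_single, one_mul, ← MonoidAlgebra.single_add]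
    rw [hr, hs, hg]
    ring

set_option maxHeartbeats 1000000 in
set_option synthInstance.maxHeartbeats 100000 in
/-- If `p ≡ 1 (mod k)` where `k` is the exponent of `G`, then the exponent of
`(ℤ⟨G⟩/(pʲ))*` is `(p-1)p^(j-1)`. -/
theorem stmt_18 (G : Type*) [CommGroup G] [Fintype G] (u : G) (hu1 : u ≠ 1)
    (hu2 : u * u = 1) (p : ℕ) (hp : p.Prime)
    (hpk : p ≡ 1 [MOD Monoid.exponent G]) (j : ℕ) (hj : 1 ≤ j) :
    Monoid.exponent
        ((ModGR ℤ G u ⧸ Ideal.span {((p : ModGR ℤ G u) ^ j)})ˣ) =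
      (p - 1) * p ^ (j - 1) := by
  classical
  haveI : Fact p.Prime := ⟨hp⟩
  -- number theory preliminaries
  have hk2 : 2 ∣ Monoid.exponent G := by
    haveI : Fact (Nat.Prime 2) := ⟨Nat.prime_two⟩
    have h2 : orderOf u = 2 := orderOf_eq_prime (by rwa [pow_two]) hu1
    simpa [h2] using Monoid.order_dvd_exponent u
  have hkd : Monoid.exponent G ∣ p - 1 := (Nat.modEq_iff_dvd' hp.one_lt.le).mp hpk.symm
  have h2d : 2 ∣ p - 1 := hk2.trans hkd
  have hp2 : p ≠ 2 := by rintro rfl; omega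
  have hodd : 3 ≤ p := by have := hp.two_le; omega
  have hσ : ∀ σ : G, σ ^ p = σ := by
    intro σ
    obtain ⟨t, ht⟩ := hkd
    have h1 : σ ^ (p - 1) = 1 := by
      rw [ht, pow_mul, Monoid.pow_exponent_eq_one, one_pow]
    calc σ ^ p = σ ^ ((p - 1) + 1) := by congr 1; omega
    _ = σ ^ (p - 1) * σ := pow_succ σ (p - 1)
    _ = σ := by rw [h1, one_mul]
  set M := ModGR ℤ G u with hM
  set I : Ideal M := Ideal.span {((p : M) ^ j)} with hI
  set mk1 : MonoidAlgebra ℤ G →+* M := Ideal.Quotient.mk (modIdeal ℤ G u) with hmk1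
  set mk2 : M →+* (M ⧸ I) := Ideal.Quotient.mk I with hmk2
  have trmk : ∀ f : MonoidAlgebra ℤ G, tr hu2 (mk1 f) = f.coeff 1 - f.coeff u := fun _ => rfl
  have hpj0 : ((p : M ⧸ I)) ^ j = 0 := by
    rw [← map_natCast mk2 p, ← map_pow, Ideal.Quotient.eq_zero_iff_mem]
    exact Ideal.subset_span rfl
  -- characteristic of the quotient is p^j
  haveI charQ : CharP (M ⧸ I) (p ^ j) := by
    constructor
    intro n
    constructor
    · intro hn
      have hmem : ((n : ℕ) : M) ∈ I := by
        rwa [← map_natCast mk2 n, Ideal.Quotient.eq_zero_iff_mem] at hn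
      obtain ⟨w, hw⟩ := Ideal.mem_span_singleton.mp hmem
      obtain ⟨g, rfl⟩ := Ideal.Quotient.mk_surjective w
      have hmk : mk1 ((n : ℕ) : MonoidAlgebra ℤ G)
          = mk1 (((p ^ j : ℕ) : MonoidAlgebra ℤ G) * g) := by
        rw [map_natCast, map_mul, map_natCast]
        rw [hw]
        push_cast
        ring
      have htr := congrArg (tr hu2) hmk
      rw [trmk, trmk] at htr
      have e1 : ((n : ℕ) : MonoidAlgebra ℤ G).coeff 1 - ((n : ℕ) : MonoidAlgebra ℤ G).coeff u = (n : ℤ) := by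
        rw [MonoidAlgebra.natCast_def, MonoidAlgebra.coeff_single, Finsupp.single_eq_same,
          Finsupp.single_eq_of_ne' (Ne.symm hu1), sub_zero]
      have e2 : ∀ x : G, (((p ^ j : ℕ) : MonoidAlgebra ℤ G) * g).coeff x = ((p ^ j : ℕ) : ℤ) * g.coeff x := by
        intro x
        rw [MonoidAlgebra.natCast_def, MonoidAlgebra.coeff_single_one_mul]
      rw [e1, e2, e2] at htr
      have : ((p ^ j : ℕ) : ℤ) ∣ (n : ℤ) := ⟨g.coeff 1 - g.coeff u, by rw [htr]; ring⟩
      exact_mod_cast this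
    · rintro ⟨t, rfl⟩
      exact (Nat.cast_mul (p ^ j) t).trans ((congrArg (· * (t : M ⧸ I)) ((Nat.cast_pow p j).trans hpj0)).trans (zero_mul (t : M ⧸ I)))
  -- upper bound
  have hupper : Monoid.exponent (M ⧸ I)ˣ ∣ (p - 1) * p ^ (j - 1) := by
    apply Monoid.exponent_dvd_of_forall_pow_eq_one
    intro x
    obtain ⟨f, hf⟩ : ∃ f : MonoidAlgebra ℤ G, mk2 (mk1 f) = (x : M ⧸ I) := by
      obtain ⟨w, hw⟩ := Ideal.Quotient.mk_surjective (x : M ⧸ I)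
      obtain ⟨f, hf⟩ := Ideal.Quotient.mk_surjective w
      exact ⟨f, by rw [← hw, ← hf]⟩
    obtain ⟨g, hg⟩ := aux_frob p hp hσ f
    have hx : (x : M ⧸ I) ^ p = (x : M ⧸ I) + (p : M ⧸ I) * mk2 (mk1 g) := by
      rw [← hf, ← map_pow, ← map_pow, hg]
      simp [map_add, map_mul, map_natCast]
    have hxy : (x : M ⧸ I) * (↑x⁻¹ : M ⧸ I) = 1 := Units.mul_inv x
    have hyp : (x : M ⧸ I) ^ (p - 1) = 1 + (p : M ⧸ I) * (mk2 (mk1 g) * (↑x⁻¹ : M ⧸ I)) := by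
      calc (x : M ⧸ I) ^ (p - 1)
          = (x : M ⧸ I) ^ (p - 1) * ((x : M ⧸ I) * (↑x⁻¹ : M ⧸ I)) := by rw [hxy]; exact (mul_one ((x : M ⧸ I) ^ (p - 1))).symm
      _ = (x : M ⧸ I) ^ ((p - 1) + 1) * (↑x⁻¹ : M ⧸ I) := by rw [pow_succ]; ring
      _ = (x : M ⧸ I) ^ p * (↑x⁻¹ : M ⧸ I) := by rw [Nat.sub_add_cancel hp.one_lt.le]
      _ = 1 + (p : M ⧸ I) * (mk2 (mk1 g) * (↑x⁻¹ : M ⧸ I)) := by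
          rw [hx, add_mul, hxy]; ring
    obtain ⟨c, hcq⟩ := aux_upper p (mk2 (mk1 g) * (↑x⁻¹ : M ⧸ I)) (j - 1)
    have hone : (x : M ⧸ I) ^ ((p - 1) * p ^ (j - 1)) = 1 := by
      rw [pow_mul, hyp, hcq, show (j - 1) + 1 = j from by omega, hpj0]; exact (congrArg (1 + ·) (zero_mul c)).trans (add_zero 1)
    ext
    rw [Units.val_pow_eq_pow_val, hone, Units.val_one]
  -- lower bound
  have hlower : (p - 1) * p ^ (j - 1) ∣ Monoid.exponent (M ⧸ I)ˣ := by
    haveI : NeZero (p ^ j) := ⟨pow_ne_zero j (by omega)⟩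
    set φ : ZMod (p ^ j) →+* M ⧸ I := ZMod.castHom (dvd_refl (p ^ j)) (M ⧸ I) with hφ
    have φinj : Function.Injective φ := ZMod.castHom_injective (M ⧸ I)
    set ψ : (ZMod (p ^ j))ˣ →* (M ⧸ I)ˣ := Units.map (φ : ZMod (p ^ j) →* M ⧸ I) with hψ
    have ψinj : Function.Injective ψ := by
      intro a b h
      exact Units.ext (φinj (congrArg Units.val h))
    have key : ∀ v : (ZMod (p ^ j))ˣ, orderOf v ∣ Monoid.exponent (M ⧸ I)ˣ := by
      intro v
      rw [← orderOf_injective ψ ψinj v]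
      exact Monoid.order_dvd_exponent _
    have part1 : (p - 1) ∣ Monoid.exponent (M ⧸ I)ˣ := by
      obtain ⟨g, hg⟩ := IsCyclic.exists_generator (α := (ZMod p)ˣ)
      have hog : orderOf g = p - 1 := by
        rw [orderOf_eq_card_of_forall_mem_zpowers hg, Nat.card_eq_fintype_card, ZMod.card_units]
      obtain ⟨b, hb⟩ := ZMod.unitsMap_surjective (dvd_pow_self p (by omega : j ≠ 0)) g
      have hdvd : (p - 1) ∣ orderOf b := by
        rw [← hog, ← hb]
        exact orderOf_map_dvd _ b
      exact hdvd.trans (key b)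
    have part2 : p ^ (j - 1) ∣ Monoid.exponent (M ⧸ I)ˣ := by
      have hpj0' : ((p : ZMod (p ^ j))) ^ j = 0 := by
        rw [← Nat.cast_pow, ZMod.natCast_self]
      obtain ⟨c, hc⟩ := aux_upper p (1 : ZMod (p ^ j)) (j - 1)
      rw [mul_one] at hc
      have hpow1 : (1 + (p : ZMod (p ^ j))) ^ (p ^ (j - 1)) = 1 := by
        rw [hc, show (j - 1) + 1 = j from by omega, hpj0', zero_mul, add_zero]
      have hvu : IsUnit (1 + (p : ZMod (p ^ j))) :=
        IsUnit.of_pow_eq_one hpow1 (pow_ne_zero _ (by omega))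
      have hvval : (hvu.unit : ZMod (p ^ j)) = 1 + (p : ZMod (p ^ j)) := hvu.unit_spec
      have hvord : orderOf hvu.unit ∣ p ^ (j - 1) := by
        apply orderOf_dvd_of_pow_eq_one
        ext
        rw [Units.val_pow_eq_pow_val, hvval, hpow1, Units.val_one]
      have hpj1 : p ^ (j - 1) ∣ orderOf hvu.unit := by
        obtain ⟨i, hile, hordv⟩ := (Nat.dvd_prime_pow hp).mp hvord
        rw [hordv, Nat.pow_dvd_pow_iff_le_right hp.one_lt]
        by_contra hlt
        push_neg at hlt
        obtain ⟨m, rfl⟩ : ∃ m, j = m + 2 := ⟨j - 2, by omega⟩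
        have hvpow : hvu.unit ^ (p ^ m) = 1 := by
          rw [← orderOf_dvd_iff_pow_eq_one, hordv]
          exact pow_dvd_pow p (by omega)
        have hval : (1 + (p : ZMod (p ^ (m + 2)))) ^ (p ^ m) = 1 := by
          have hh := congrArg Units.val hvpow
          rwa [Units.val_pow_eq_pow_val, hvval, Units.val_one] at hh
        obtain ⟨b, hb⟩ := aux_lower p hp hodd m
        have hcast := congrArg (Int.cast : ℤ → ZMod (p ^ (m + 2))) hb
        push_cast at hcast
        rw [hval] at hcast
        have h2 : ((p : ZMod (p ^ (m + 2)))) ^ (m + 2) = 0 := by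
          rw [← Nat.cast_pow, ZMod.natCast_self]
        have h1 : ((p : ZMod (p ^ (m + 2)))) ^ (m + 1) = 0 := by
          linear_combination hcast.symm - (b : ZMod (p ^ (m + 2))) * h2
        have h3 : (p : ℕ) ^ (m + 2) ∣ p ^ (m + 1) := by
          rw [← ZMod.natCast_eq_zero_iff]
          push_cast
          exact h1
        have := (Nat.pow_dvd_pow_iff_le_right hp.one_lt).mp h3
        omega
      exact hpj1.trans (key hvu.unit)
    have hco : Nat.Coprime (p - 1) (p ^ (j - 1)) := by
      have h1 : Nat.Coprime p (p - 1) :=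
        hp.coprime_iff_not_dvd.mpr (Nat.not_dvd_of_pos_of_lt (by omega) (by omega))
      exact (Nat.Coprime.pow_right _ h1.symm)
    exact hco.mul_dvd_of_dvd_of_dvd part1 part2
  exact Nat.dvd_antisymm hupper hlower
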